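/- Let X be a Banach lattice and Y a Banach sequence lattice with Köthe dual Y^×. Then for every n ∈ ℕ, x₁,...,x_n ∈ X and φ₁,...,φ_n ∈ X*, Σ_{j=1}^n |φ_j(x_j)| ≤ ⟨ ‖(x₁,...,x_n)‖_Y , ‖(φ₁,...,φ_n)‖_{Y^×} ⟩, where ‖(x₁,...,x_n)‖_Y ∈ X and ‖(φ₁,...,φ_n)‖_{Y^×} ∈ X* are defined via Krivine's functional calculus in X and in the dual Banach lattice X* respectively, and ⟨·,·⟩ is the duality pairing. -/

import Mathlib

open Filter Topology

/-- A Banach sequence lattice: a Banach function space over `ℕ` with counting measure,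
an ideal of sequences with an order-preserving (monotone) complete norm, containing all
canonical unit vectors. -/
structure BanachSeqLattice where
  Mem : (ℕ → ℝ) → Prop
  nrm : (ℕ → ℝ) → ℝ
  zero_mem : Mem 0
  add_mem : ∀ {f g : ℕ → ℝ}, Mem f → Mem g → Mem (f + g)
  smul_mem : ∀ (c : ℝ) {f : ℕ → ℝ}, Mem f → Mem (c • f)
  ideal : ∀ {f g : ℕ → ℝ}, (∀ n, |f n| ≤ |g n|) → Mem g → Mem f
  nrm_mono : ∀ {f g : ℕ → ℝ}, Mem g → (∀ n, |f n| ≤ |g n|) → nrm f ≤ nrm g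
  nrm_nonneg : ∀ f : ℕ → ℝ, 0 ≤ nrm f
  nrm_eq_zero_iff : ∀ {f : ℕ → ℝ}, Mem f → (nrm f = 0 ↔ f = 0)
  nrm_add_le : ∀ {f g : ℕ → ℝ}, Mem f → Mem g → nrm (f + g) ≤ nrm f + nrm g
  nrm_smul : ∀ (c : ℝ) (f : ℕ → ℝ), nrm (c • f) = |c| * nrm f
  unit_mem : ∀ n : ℕ, Mem (fun k => if k = n then 1 else 0)
  complete : ∀ u : ℕ → (ℕ → ℝ), (∀ m, Mem (u m)) →
    (∀ ε : ℝ, 0 < ε → ∃ N, ∀ m, N ≤ m → ∀ k, N ≤ k → nrm (u m - u k) < ε) →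
    ∃ f, Mem f ∧ Filter.Tendsto (fun m => nrm (u m - f)) Filter.atTop (nhds 0)

/-- Membership in the Köthe dual `Y^×` of a Banach sequence lattice. -/
def Kmem (Y : BanachSeqLattice) (β : ℕ → ℝ) : Prop :=
  ∀ α : ℕ → ℝ, Y.Mem α → Summable (fun n => |α n * β n|)

/-- The Köthe dual norm `‖β‖_{Y^×} = sup { Σ |α_n β_n| : ‖α‖_Y ≤ 1 }`. -/
noncomputable def Knrm (Y : BanachSeqLattice) (β : ℕ → ℝ) : ℝ :=
  sSup {s : ℝ | ∃ α : ℕ → ℝ, Y.Mem α ∧ Y.nrm α ≤ 1 ∧ s = ∑' n, |α n * β n|}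

/-- Continuous positively 1-homogeneous functions on `ℝⁿ` (the space `𝓗_n`). -/
def Hom1 (n : ℕ) (h : (Fin n → ℝ) → ℝ) : Prop :=
  Continuous h ∧ ∀ c : ℝ, 0 ≤ c → ∀ t, h (c • t) = c * h t

/-- Extension of a finite vector to a sequence, by zero. -/
def finSeq (n : ℕ) (t : Fin n → ℝ) : ℕ → ℝ :=
  fun k => if hk : k < n then t ⟨k, hk⟩ else 0

/-- The element `‖(x₁,...,x_n)‖_Y ∈ X` given by Krivine's functional calculus `τ`. -/
noncomputable def vY (Y : BanachSeqLattice) {X : Type*} [NormedAddCommGroup X] [Lattice X] [HasSolidNorm X] [IsOrderedAddMonoid X]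
    (τ : ∀ n : ℕ, (Fin n → X) → ((Fin n → ℝ) → ℝ) → X)
    (n : ℕ) (x : Fin n → X) : X :=
  τ n x (fun t => Y.nrm (finSeq n t))

/-- The norm of the space `ℓ^{τ,Y}(X)`: `sup_n ‖ ‖(x₁,...,x_n)‖_Y ‖_X`. -/
noncomputable def Tnrm (Y : BanachSeqLattice) {X : Type*} [NormedAddCommGroup X] [Lattice X] [HasSolidNorm X] [IsOrderedAddMonoid X]
    (τ : ∀ n : ℕ, (Fin n → X) → ((Fin n → ℝ) → ℝ) → X) (x : ℕ → X) : ℝ :=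
  ⨆ n : ℕ, ‖vY Y τ n (fun j : Fin n => x (j : ℕ))‖

/-- Membership in `ℓ^{τ,Y}(X)`. -/
def Tmem (Y : BanachSeqLattice) {X : Type*} [NormedAddCommGroup X] [Lattice X] [HasSolidNorm X] [IsOrderedAddMonoid X]
    (τ : ∀ n : ℕ, (Fin n → X) → ((Fin n → ℝ) → ℝ) → X) (x : ℕ → X) : Prop :=
  BddAbove (Set.range fun n : ℕ => ‖vY Y τ n (fun j : Fin n => x (j : ℕ))‖)

/-- Membership in `ℓ₀^{τ,Y}(X)`, the closure of the eventually zero sequences. -/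
def T0mem (Y : BanachSeqLattice) {X : Type*} [NormedAddCommGroup X] [Lattice X] [HasSolidNorm X] [IsOrderedAddMonoid X]
    (τ : ∀ n : ℕ, (Fin n → X) → ((Fin n → ℝ) → ℝ) → X) (x : ℕ → X) : Prop :=
  Tmem Y τ x ∧ ∀ ε : ℝ, 0 < ε → ∃ v : ℕ → X,
    (∃ N, ∀ j, N ≤ j → v j = 0) ∧ Tnrm Y τ (x - v) < ε

section Aux

open Finset

variable (Y : BanachSeqLattice)

/-- unit vector sequence -/
def eSeq (m : ℕ) : ℕ → ℝ := fun k => if k = m then 1 else 0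

lemma mem_finsum {ι : Type*} (s : Finset ι) (f : ι → ℕ → ℝ)
    (hf : ∀ i ∈ s, Y.Mem (f i)) : Y.Mem (∑ i ∈ s, f i) := by
  classical
  induction s using Finset.cons_induction with
  | empty => simpa using Y.zero_mem
  | cons a s ha ih =>
    rw [Finset.sum_cons]
    exact Y.add_mem (hf a (Finset.mem_cons_self a s))
      (ih fun i hi => hf i (Finset.mem_cons_of_mem hi))

lemma nrm_zero : Y.nrm 0 = 0 := by
  have := Y.nrm_smul 0 0
  simpa using this

lemma eSeq_nrm_pos (m : ℕ) : 0 < Y.nrm (eSeq m) := by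
  rcases lt_or_eq_of_le (Y.nrm_nonneg (eSeq m)) with h | h
  · exact h
  · exfalso
    have h0 : eSeq m = 0 := (Y.nrm_eq_zero_iff (Y.unit_mem m)).1 h.symm
    have := congrFun h0 m
    simp [eSeq] at this

lemma coord_le (α : ℕ → ℝ) (hα : Y.Mem α) (m : ℕ) :
    |α m| * Y.nrm (eSeq m) ≤ Y.nrm α := by
  have h1 : Y.nrm (α m • eSeq m) = |α m| * Y.nrm (eSeq m) := Y.nrm_smul _ _
  rw [← h1]
  refine Y.nrm_mono hα fun k => ?_
  by_cases hk : k = m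
  · subst hk; simp [eSeq]
  · simp [eSeq, hk]

lemma finSeq_coe {n : ℕ} (t : Fin n → ℝ) (j : Fin n) : finSeq n t (j : ℕ) = t j := by
  simp [finSeq, j.isLt]

lemma finSeq_eq_sum {n : ℕ} (t : Fin n → ℝ) :
    finSeq n t = ∑ j : Fin n, (t j) • eSeq (j : ℕ) := by
  classical
  funext k
  rw [Finset.sum_apply]
  by_cases hk : k < n
  · rw [Finset.sum_eq_single (⟨k, hk⟩ : Fin n)]
    · simp [finSeq, hk, eSeq]
    · intro j _ hj
      have : k ≠ (j : ℕ) := by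
        intro h; apply hj; apply Fin.ext; simp [← h]
      simp [eSeq, this]
    · intro h; exact absurd (Finset.mem_univ _) h
  · have : ∀ j : Fin n, (t j • eSeq (j : ℕ)) k = 0 := by
      intro j
      have : k ≠ (j : ℕ) := by
        intro h; exact hk (h ▸ j.isLt)
      simp [eSeq, this]
    simp [finSeq, hk, this]

lemma finSeq_mem {n : ℕ} (t : Fin n → ℝ) : Y.Mem (finSeq n t) := by
  rw [finSeq_eq_sum]
  exact mem_finsum Y _ _ fun j _ => Y.smul_mem _ (Y.unit_mem _)

lemma finSeq_add {n : ℕ} (t s : Fin n → ℝ) :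
    finSeq n (t + s) = finSeq n t + finSeq n s := by
  funext k; by_cases hk : k < n <;> simp [finSeq, hk]

lemma finSeq_smul {n : ℕ} (c : ℝ) (t : Fin n → ℝ) :
    finSeq n (c • t) = c • finSeq n t := by
  funext k; by_cases hk : k < n <;> simp [finSeq, hk]

lemma finSeq_zero {n : ℕ} : finSeq n (0 : Fin n → ℝ) = 0 := by
  funext k; by_cases hk : k < n <;> simp [finSeq, hk]

end Aux
section Aux2

open Finset

variable (Y : BanachSeqLattice) {n : ℕ}

/-- the finite-dimensional lattice norm induced by `Y` -/
noncomputable def hY (n : ℕ) : (Fin n → ℝ) → ℝ := fun t => Y.nrm (finSeq n t)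
/-- the finite-dimensional Köthe dual norm -/
noncomputable def hK (Y : BanachSeqLattice) (n : ℕ) : (Fin n → ℝ) → ℝ :=
  fun s => Knrm Y (finSeq n s)

lemma hY_nonneg (t : Fin n → ℝ) : 0 ≤ hY Y n t := Y.nrm_nonneg _

lemma hY_zero : hY Y n 0 = 0 := by rw [hY, finSeq_zero, nrm_zero]

lemma hY_smul (c : ℝ) (t : Fin n → ℝ) : hY Y n (c • t) = |c| * hY Y n t := by
  rw [hY, finSeq_smul, Y.nrm_smul]; rfl

lemma hY_add_le (t s : Fin n → ℝ) : hY Y n (t + s) ≤ hY Y n t + hY Y n s := by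
  rw [hY, finSeq_add]
  exact Y.nrm_add_le (finSeq_mem Y t) (finSeq_mem Y s)

lemma hY_mono {t s : Fin n → ℝ} (h : ∀ j, |t j| ≤ |s j|) : hY Y n t ≤ hY Y n s := by
  refine Y.nrm_mono (finSeq_mem Y s) fun k => ?_
  by_cases hk : k < n
  · simpa [finSeq, hk] using h ⟨k, hk⟩
  · simp [finSeq, hk]

lemma hY_congr_abs {t s : Fin n → ℝ} (h : ∀ j, |t j| = |s j|) : hY Y n t = hY Y n s :=
  le_antisymm (hY_mono Y fun j => (h j).le) (hY_mono Y fun j => (h j).ge)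

lemma hY_eq_zero {t : Fin n → ℝ} (h : hY Y n t = 0) : t = 0 := by
  have h0 : finSeq n t = 0 := (Y.nrm_eq_zero_iff (finSeq_mem Y t)).1 h
  funext j
  have := congrFun h0 (j : ℕ)
  rwa [finSeq_coe] at this

lemma hY_pos {t : Fin n → ℝ} (h : t ≠ 0) : 0 < hY Y n t := by
  rcases lt_or_eq_of_le (hY_nonneg Y t) with h' | h'
  · exact h'
  · exact absurd (hY_eq_zero Y h'.symm) h

/-- The Knrm set for a finitely-supported sequence. -/
lemma zero_mem_KnrmSet (β : ℕ → ℝ) :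
    (0:ℝ) ∈ {s : ℝ | ∃ α : ℕ → ℝ, Y.Mem α ∧ Y.nrm α ≤ 1 ∧ s = ∑' n, |α n * β n|} := by
  refine ⟨0, Y.zero_mem, by rw [nrm_zero]; norm_num, ?_⟩
  simp

lemma tsum_finSeq (α : ℕ → ℝ) (s : Fin n → ℝ) :
    ∑' k, |α k * finSeq n s k| = ∑ j : Fin n, |α (j : ℕ) * s j| := by
  rw [tsum_eq_sum (s := Finset.range n) (by
    intro k hk
    have : ¬ k < n := by simpa using hk
    simp [finSeq, this])]
  rw [← Fin.sum_univ_eq_sum_range (fun k => |α k * finSeq n s k|) n]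
  exact Finset.sum_congr rfl fun j _ => by rw [finSeq_coe]

lemma KnrmSet_bddAbove (s : Fin n → ℝ) :
    BddAbove {r : ℝ | ∃ α : ℕ → ℝ, Y.Mem α ∧ Y.nrm α ≤ 1 ∧ r = ∑' k, |α k * finSeq n s k|} := by
  refine ⟨∑ j : Fin n, |s j| * (Y.nrm (eSeq (j : ℕ)))⁻¹, ?_⟩
  rintro r ⟨α, hα, hα1, rfl⟩
  rw [tsum_finSeq]
  refine Finset.sum_le_sum fun j _ => ?_
  rw [abs_mul]
  have hpos := eSeq_nrm_pos Y (j : ℕ)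
  have hcoord : |α (j : ℕ)| ≤ (Y.nrm (eSeq (j : ℕ)))⁻¹ := by
    rw [← one_div, le_div_iff₀ hpos]
    calc |α (j:ℕ)| * Y.nrm (eSeq (j:ℕ)) ≤ Y.nrm α := coord_le Y α hα _
      _ ≤ 1 := hα1
  calc |α (j:ℕ)| * |s j| ≤ (Y.nrm (eSeq (j : ℕ)))⁻¹ * |s j| := by
        exact mul_le_mul_of_nonneg_right hcoord (abs_nonneg _)
    _ = |s j| * (Y.nrm (eSeq (j : ℕ)))⁻¹ := mul_comm _ _

lemma hK_nonneg (s : Fin n → ℝ) : 0 ≤ hK Y n s :=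
  le_csSup (KnrmSet_bddAbove Y s) (zero_mem_KnrmSet Y _)

lemma holder (t s : Fin n → ℝ) :
    ∑ j : Fin n, |t j * s j| ≤ hY Y n t * hK Y n s := by
  by_cases ht : t = 0
  · subst ht; simp [hY_zero]
  · have hpos : 0 < hY Y n t := hY_pos Y ht
    set α : ℕ → ℝ := (hY Y n t)⁻¹ • finSeq n t with hαdef
    have hmem : Y.Mem α := Y.smul_mem _ (finSeq_mem Y t)
    have hnrm : Y.nrm α = 1 := by
      rw [hαdef, Y.nrm_smul, abs_of_nonneg (inv_nonneg.2 hpos.le)]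
      exact inv_mul_cancel₀ hpos.ne'
    have helt : (hY Y n t)⁻¹ * ∑ j : Fin n, |t j * s j| ≤ hK Y n s := by
      refine le_csSup (KnrmSet_bddAbove Y s) ⟨α, hmem, hnrm.le, ?_⟩
      rw [tsum_finSeq, Finset.mul_sum]
      refine Finset.sum_congr rfl fun j _ => ?_
      have hc : α (j : ℕ) = (hY Y n t)⁻¹ * t j := by
        rw [hαdef]; simp only [Pi.smul_apply, smul_eq_mul]; rw [finSeq_coe]
      rw [hc, abs_mul ((hY Y n t)⁻¹ * t j), abs_mul (hY Y n t)⁻¹,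
        abs_of_nonneg (inv_nonneg.2 hpos.le), abs_mul, mul_assoc]
    calc ∑ j : Fin n, |t j * s j|
        = hY Y n t * ((hY Y n t)⁻¹ * ∑ j : Fin n, |t j * s j|) := by
          field_simp
      _ ≤ hY Y n t * hK Y n s := mul_le_mul_of_nonneg_left helt hpos.le

lemma hK_add_le (s s' : Fin n → ℝ) : hK Y n (s + s') ≤ hK Y n s + hK Y n s' := by
  refine Real.sSup_le ?_ (add_nonneg (hK_nonneg Y s) (hK_nonneg Y s'))
  rintro r ⟨α, hα, hα1, rfl⟩
  rw [tsum_finSeq]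
  have key : ∑ j : Fin n, |α (j:ℕ) * (s + s') j|
      ≤ (∑ j : Fin n, |α (j:ℕ) * s j|) + ∑ j : Fin n, |α (j:ℕ) * s' j| := by
    rw [← Finset.sum_add_distrib]
    refine Finset.sum_le_sum fun j _ => ?_
    have : α (j:ℕ) * (s + s') j = α (j:ℕ) * s j + α (j:ℕ) * s' j := by
      simp [mul_add]
    rw [this]; exact abs_add_le _ _
  refine key.trans (add_le_add ?_ ?_)
  · exact le_csSup (KnrmSet_bddAbove Y s) ⟨α, hα, hα1, (tsum_finSeq α s).symm⟩
  · exact le_csSup (KnrmSet_bddAbove Y s') ⟨α, hα, hα1, (tsum_finSeq α s').symm⟩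

lemma hK_smul_le (c : ℝ) (s : Fin n → ℝ) : hK Y n (c • s) ≤ |c| * hK Y n s := by
  refine Real.sSup_le ?_ (mul_nonneg (abs_nonneg c) (hK_nonneg Y s))
  rintro r ⟨α, hα, hα1, rfl⟩
  rw [tsum_finSeq]
  have : ∑ j : Fin n, |α (j:ℕ) * (c • s) j| = |c| * ∑ j : Fin n, |α (j:ℕ) * s j| := by
    rw [Finset.mul_sum]
    refine Finset.sum_congr rfl fun j _ => ?_
    simp only [Pi.smul_apply, smul_eq_mul]
    rw [show α (j:ℕ) * (c * s j) = c * (α (j:ℕ) * s j) by ring, abs_mul]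
  rw [this]
  exact mul_le_mul_of_nonneg_left
    (le_csSup (KnrmSet_bddAbove Y s) ⟨α, hα, hα1, (tsum_finSeq α s).symm⟩) (abs_nonneg c)

lemma hK_smul (c : ℝ) (s : Fin n → ℝ) : hK Y n (c • s) = |c| * hK Y n s := by
  rcases eq_or_ne c 0 with rfl | hc
  · simp only [abs_zero, zero_mul, zero_smul]
    refine le_antisymm ?_ (hK_nonneg Y 0)
    have := hK_smul_le Y 0 (0 : Fin n → ℝ)
    simpa using this
  · refine le_antisymm (hK_smul_le Y c s) ?_
    have h2 := hK_smul_le Y c⁻¹ (c • s)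
    rw [smul_smul, inv_mul_cancel₀ hc, one_smul] at h2
    calc |c| * hK Y n s ≤ |c| * (|c⁻¹| * hK Y n (c • s)) :=
          mul_le_mul_of_nonneg_left h2 (abs_nonneg c)
      _ = hK Y n (c • s) := by
          rw [abs_inv, ← mul_assoc, mul_inv_cancel₀ (abs_ne_zero.2 hc), one_mul]

end Aux2
section Aux3

open Finset

variable {n : ℕ}

lemma normlike_zero (N : (Fin n → ℝ) → ℝ)
    (Nsmul : ∀ (c : ℝ) t, N (c • t) = |c| * N t) : N 0 = 0 := by
  have := Nsmul 0 0
  simpa using this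

lemma normlike_nonneg (N : (Fin n → ℝ) → ℝ)
    (Nadd : ∀ t s, N (t + s) ≤ N t + N s)
    (Nsmul : ∀ (c : ℝ) t, N (c • t) = |c| * N t) (t : Fin n → ℝ) : 0 ≤ N t := by
  have hneg : N (-t) = N t := by
    have := Nsmul (-1) t
    simpa using this
  have h0 : N 0 ≤ N t + N (-t) := by
    have := Nadd t (-t)
    simpa using this
  rw [normlike_zero N Nsmul, hneg] at h0
  linarith

lemma normlike_sum_le (N : (Fin n → ℝ) → ℝ)
    (Nadd : ∀ t s, N (t + s) ≤ N t + N s)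
    (Nsmul : ∀ (c : ℝ) t, N (c • t) = |c| * N t)
    {ι : Type*} (s : Finset ι) (f : ι → Fin n → ℝ) :
    N (∑ i ∈ s, f i) ≤ ∑ i ∈ s, N (f i) := by
  classical
  induction s using Finset.cons_induction with
  | empty => simp [normlike_zero N Nsmul]
  | cons a s ha ih =>
    rw [Finset.sum_cons, Finset.sum_cons]
    exact (Nadd _ _).trans (add_le_add le_rfl ih)

lemma normlike_coord_bound (N : (Fin n → ℝ) → ℝ)
    (Nadd : ∀ t s, N (t + s) ≤ N t + N s)
    (Nsmul : ∀ (c : ℝ) t, N (c • t) = |c| * N t) (t : Fin n → ℝ) :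
    N t ≤ ∑ j : Fin n, |t j| * N (Pi.single j 1) := by
  have ht : t = ∑ j : Fin n, Pi.single j (t j) := (Finset.univ_sum_single t).symm
  calc N t = N (∑ j : Fin n, Pi.single j (t j)) := by rw [← ht]
    _ ≤ ∑ j : Fin n, N (Pi.single j (t j)) := normlike_sum_le N Nadd Nsmul _ _
    _ = ∑ j : Fin n, |t j| * N (Pi.single j 1) := by
        refine Finset.sum_congr rfl fun j _ => ?_
        have hu : Pi.single j (t j) = (t j) • (Pi.single j 1 : Fin n → ℝ) := by
          funext k
          by_cases hk : k = j
          · subst hk; simp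
          · simp [Pi.single_apply, hk]
        rw [hu, Nsmul]

lemma normlike_continuous (N : (Fin n → ℝ) → ℝ)
    (Nadd : ∀ t s, N (t + s) ≤ N t + N s)
    (Nsmul : ∀ (c : ℝ) t, N (c • t) = |c| * N t) : Continuous N := by
  set C : ℝ := ∑ j : Fin n, N (Pi.single j 1) with hC
  have hC0 : 0 ≤ C := Finset.sum_nonneg fun j _ => normlike_nonneg N Nadd Nsmul _
  have key : ∀ a b : Fin n → ℝ, N a - N b ≤ C * dist a b := by
    intro a b
    have h1 : N a ≤ N b + N (a - b) := by
      have := Nadd b (a - b)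
      simpa using this
    have h2 : N (a - b) ≤ ∑ j : Fin n, |a j - b j| * N (Pi.single j 1) := by
      simpa using normlike_coord_bound N Nadd Nsmul (a - b)
    have h3 : ∑ j : Fin n, |a j - b j| * N (Pi.single j 1) ≤ C * dist a b := by
      rw [hC, Finset.sum_mul]
      refine Finset.sum_le_sum fun j _ => ?_
      rw [mul_comm (N (Pi.single j 1)) (dist a b)]
      refine mul_le_mul_of_nonneg_right ?_ (normlike_nonneg N Nadd Nsmul _)
      calc |a j - b j| = dist (a j) (b j) := (Real.dist_eq _ _).symm
        _ ≤ dist a b := dist_le_pi_dist a b j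
    linarith
  refine (LipschitzWith.of_dist_le_mul (K := C.toNNReal) fun a b => ?_).continuous
  rw [Real.coe_toNNReal C hC0, Real.dist_eq, abs_sub_le_iff]
  constructor
  · exact key a b
  · rw [dist_comm]; exact key b a

lemma hY_cont (Y : BanachSeqLattice) : Continuous (hY Y n) :=
  normlike_continuous _ (hY_add_le Y) (hY_smul Y)

lemma hK_cont (Y : BanachSeqLattice) : Continuous (hK Y n) :=
  normlike_continuous _ (hK_add_le Y) (hK_smul Y)

lemma hY_hom1 (Y : BanachSeqLattice) : Hom1 n (hY Y n) :=
  ⟨hY_cont Y, fun c hc t => by rw [hY_smul, abs_of_nonneg hc]⟩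

lemma hK_hom1 (Y : BanachSeqLattice) : Hom1 n (hK Y n) :=
  ⟨hK_cont Y, fun c hc t => by rw [hK_smul, abs_of_nonneg hc]⟩

-- Hom1 basic lemmas
lemma hom1_zero : Hom1 n (0 : (Fin n → ℝ) → ℝ) :=
  ⟨continuous_const, fun c _ t => by simp⟩

lemma hom1_add {h₁ h₂ : (Fin n → ℝ) → ℝ} (H1 : Hom1 n h₁) (H2 : Hom1 n h₂) :
    Hom1 n (h₁ + h₂) :=
  ⟨H1.1.add H2.1, fun c hc t => by
    simp only [Pi.add_apply, H1.2 c hc t, H2.2 c hc t]; ring⟩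

lemma hom1_smul (c : ℝ) {h : (Fin n → ℝ) → ℝ} (H : Hom1 n h) : Hom1 n (c • h) :=
  ⟨H.1.const_smul c, fun d hd t => by
    simp only [Pi.smul_apply, smul_eq_mul, H.2 d hd t]; ring⟩

lemma hom1_sup {h₁ h₂ : (Fin n → ℝ) → ℝ} (H1 : Hom1 n h₁) (H2 : Hom1 n h₂) :
    Hom1 n (h₁ ⊔ h₂) :=
  ⟨H1.1.max H2.1, fun c hc t => by
    simp only [Pi.sup_apply, H1.2 c hc t, H2.2 c hc t]
    exact (mul_max_of_nonneg _ _ hc).symm⟩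

lemma hom1_proj (j : Fin n) : Hom1 n (fun t => t j) :=
  ⟨continuous_apply j, fun c _ t => by simp⟩

lemma hom1_fun_add {h₁ h₂ : (Fin n → ℝ) → ℝ} (H1 : Hom1 n h₁) (H2 : Hom1 n h₂) :
    Hom1 n (fun t => h₁ t + h₂ t) := hom1_add H1 H2

lemma hom1_fun_smul (c : ℝ) {h : (Fin n → ℝ) → ℝ} (H : Hom1 n h) :
    Hom1 n (fun t => c * h t) := hom1_smul c H

lemma hom1_sum {ι : Type*} (s : Finset ι) (f : ι → (Fin n → ℝ) → ℝ)
    (hf : ∀ i ∈ s, Hom1 n (f i)) : Hom1 n (fun t => ∑ i ∈ s, f i t) := by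
  classical
  induction s using Finset.cons_induction with
  | empty => simp only [Finset.sum_empty]; exact hom1_zero
  | cons a s ha ih =>
    simp only [Finset.sum_cons]
    exact hom1_fun_add (hf a (Finset.mem_cons_self a s))
      (ih fun i hi => hf i (Finset.mem_cons_of_mem hi))

end Aux3
section Tau

variable {E : Type*} [NormedAddCommGroup E] [Lattice E] [HasSolidNorm E] [IsOrderedAddMonoid E] [NormedSpace ℝ E]
variable {n : ℕ}

lemma tau_zero (τ : ∀ n : ℕ, (Fin n → E) → ((Fin n → ℝ) → ℝ) → E)
    (htsmul : ∀ (n : ℕ) (x : Fin n → E) (c : ℝ) (h : (Fin n → ℝ) → ℝ), Hom1 n h →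
      τ n x (c • h) = c • τ n x h)
    (x : Fin n → E) : τ n x 0 = 0 := by
  have h0 : (0 : (Fin n → ℝ) → ℝ) = (0:ℝ) • (0 : (Fin n → ℝ) → ℝ) := by simp
  rw [h0, htsmul n x 0 0 hom1_zero, zero_smul]

lemma tau_mono (τ : ∀ n : ℕ, (Fin n → E) → ((Fin n → ℝ) → ℝ) → E)
    (htsup : ∀ (n : ℕ) (x : Fin n → E) (h₁ h₂ : (Fin n → ℝ) → ℝ), Hom1 n h₁ → Hom1 n h₂ →
      τ n x (h₁ ⊔ h₂) = τ n x h₁ ⊔ τ n x h₂)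
    (x : Fin n → E) {k₁ k₂ : (Fin n → ℝ) → ℝ} (H1 : Hom1 n k₁) (H2 : Hom1 n k₂)
    (hle : ∀ t, k₁ t ≤ k₂ t) : τ n x k₁ ≤ τ n x k₂ := by
  have hsup : k₁ ⊔ k₂ = k₂ := by
    funext t; exact sup_eq_right.2 (hle t)
  have h := htsup n x k₁ k₂ H1 H2
  rw [hsup] at h
  exact sup_eq_right.1 h.symm

lemma tau_nonneg (τ : ∀ n : ℕ, (Fin n → E) → ((Fin n → ℝ) → ℝ) → E)
    (htsmul : ∀ (n : ℕ) (x : Fin n → E) (c : ℝ) (h : (Fin n → ℝ) → ℝ), Hom1 n h →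
      τ n x (c • h) = c • τ n x h)
    (htsup : ∀ (n : ℕ) (x : Fin n → E) (h₁ h₂ : (Fin n → ℝ) → ℝ), Hom1 n h₁ → Hom1 n h₂ →
      τ n x (h₁ ⊔ h₂) = τ n x h₁ ⊔ τ n x h₂)
    (x : Fin n → E) {k : (Fin n → ℝ) → ℝ} (H : Hom1 n k) (hk : ∀ t, 0 ≤ k t) :
    0 ≤ τ n x k := by
  have h := tau_mono τ htsup x hom1_zero H hk
  rwa [tau_zero τ htsmul] at h

lemma tau_sum (τ : ∀ n : ℕ, (Fin n → E) → ((Fin n → ℝ) → ℝ) → E)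
    (htadd : ∀ (n : ℕ) (x : Fin n → E) (h₁ h₂ : (Fin n → ℝ) → ℝ), Hom1 n h₁ → Hom1 n h₂ →
      τ n x (h₁ + h₂) = τ n x h₁ + τ n x h₂)
    (htsmul : ∀ (n : ℕ) (x : Fin n → E) (c : ℝ) (h : (Fin n → ℝ) → ℝ), Hom1 n h →
      τ n x (c • h) = c • τ n x h)
    (x : Fin n → E) {ι : Type*} (s : Finset ι) (k : ι → (Fin n → ℝ) → ℝ)
    (hk : ∀ i ∈ s, Hom1 n (k i)) :
    τ n x (fun t => ∑ i ∈ s, k i t) = ∑ i ∈ s, τ n x (k i) := by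
  classical
  induction s using Finset.cons_induction with
  | empty => simp only [Finset.sum_empty]; exact tau_zero τ htsmul x
  | cons a s ha ih =>
    have h1 : Hom1 n (k a) := hk a (Finset.mem_cons_self a s)
    have h2 : Hom1 n (fun t => ∑ i ∈ s, k i t) :=
      hom1_sum s k fun i hi => hk i (Finset.mem_cons_of_mem hi)
    have he : (fun t => ∑ i ∈ Finset.cons a s ha, k i t)
        = k a + (fun t => ∑ i ∈ s, k i t) := by
      funext t; simp only [Finset.sum_cons, Pi.add_apply]
    rw [he, htadd n x _ _ h1 h2, ih fun i hi => hk i (Finset.mem_cons_of_mem hi),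
      Finset.sum_cons]

lemma tau_fun_smul (τ : ∀ n : ℕ, (Fin n → E) → ((Fin n → ℝ) → ℝ) → E)
    (htsmul : ∀ (n : ℕ) (x : Fin n → E) (c : ℝ) (h : (Fin n → ℝ) → ℝ), Hom1 n h →
      τ n x (c • h) = c • τ n x h)
    (x : Fin n → E) (c : ℝ) {k : (Fin n → ℝ) → ℝ} (H : Hom1 n k) :
    τ n x (fun t => c * k t) = c • τ n x k := htsmul n x c k H

lemma tau_sub (τ : ∀ n : ℕ, (Fin n → E) → ((Fin n → ℝ) → ℝ) → E)
    (htadd : ∀ (n : ℕ) (x : Fin n → E) (h₁ h₂ : (Fin n → ℝ) → ℝ), Hom1 n h₁ → Hom1 n h₂ →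
      τ n x (h₁ + h₂) = τ n x h₁ + τ n x h₂)
    (htsmul : ∀ (n : ℕ) (x : Fin n → E) (c : ℝ) (h : (Fin n → ℝ) → ℝ), Hom1 n h →
      τ n x (c • h) = c • τ n x h)
    (x : Fin n → E) {k₁ k₂ : (Fin n → ℝ) → ℝ} (H1 : Hom1 n k₁) (H2 : Hom1 n k₂) :
    τ n x (fun t => k₁ t - k₂ t) = τ n x k₁ - τ n x k₂ := by
  have hneg : Hom1 n ((-1 : ℝ) • k₂) := hom1_smul _ H2
  have he : (fun t => k₁ t - k₂ t) = k₁ + ((-1 : ℝ) • k₂) := by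
    funext t
    simp only [Pi.add_apply, Pi.smul_apply, smul_eq_mul]
    ring
  rw [he, htadd n x _ _ H1 hneg, htsmul n x (-1) k₂ H2]
  simp [sub_eq_add_neg]

lemma tau_coord_combo (τ : ∀ n : ℕ, (Fin n → E) → ((Fin n → ℝ) → ℝ) → E)
    (htadd : ∀ (n : ℕ) (x : Fin n → E) (h₁ h₂ : (Fin n → ℝ) → ℝ), Hom1 n h₁ → Hom1 n h₂ →
      τ n x (h₁ + h₂) = τ n x h₁ + τ n x h₂)
    (htsmul : ∀ (n : ℕ) (x : Fin n → E) (c : ℝ) (h : (Fin n → ℝ) → ℝ), Hom1 n h →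
      τ n x (c • h) = c • τ n x h)
    (htproj : ∀ (n : ℕ) (x : Fin n → E) (j : Fin n), τ n x (fun t => t j) = x j)
    (x : Fin n → E) (c : Fin n → ℝ) :
    τ n x (fun t => ∑ j : Fin n, c j * t j) = ∑ j : Fin n, c j • x j := by
  rw [tau_sum τ htadd htsmul x Finset.univ (fun j t => c j * t j)
    (fun j _ => hom1_fun_smul (c j) (hom1_proj j))]
  refine Finset.sum_congr rfl fun j _ => ?_
  rw [tau_fun_smul τ htsmul x (c j) (hom1_proj j), htproj n x j]

end Tau
section Partition

open Metric Set

variable {n : ℕ}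

lemma partition_main (h : (Fin n → ℝ) → ℝ)
    (hcont : Continuous h) (hhom : ∀ (c : ℝ) (t : Fin n → ℝ), h (c • t) = |c| * h t)
    (hnonneg : ∀ t, 0 ≤ h t) (hdef : ∀ t, h t = 0 → t = 0)
    (hbound : ∃ C, ∀ t, h t = 1 → ‖t‖ ≤ C)
    {δ : ℝ} (hδ : 0 < δ) :
    ∃ (T : Finset (Fin n → ℝ)) (q : (Fin n → ℝ) → (Fin n → ℝ) → ℝ),
      (∀ θ ∈ T, h θ = 1) ∧
      (∀ θ ∈ T, Hom1 n (q θ)) ∧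
      (∀ θ ∈ T, ∀ t, 0 ≤ q θ t) ∧
      (∀ t, ∑ θ ∈ T, q θ t = h t) ∧
      (∀ t (j : Fin n), |(∑ θ ∈ T, θ j * q θ t) - t j| ≤ δ * h t) := by
  classical
  obtain ⟨C, hC⟩ := hbound
  have h0 : h 0 = 0 := by
    have := hhom 0 0; simpa using this
  -- the "sphere"
  set S : Set (Fin n → ℝ) := {t | h t = 1} with hS
  have hSclosed : IsClosed S := isClosed_eq hcont continuous_const
  have hSbdd : Bornology.IsBounded S := by
    refine (Metric.isBounded_closedBall (x := (0 : Fin n → ℝ)) (r := C)).subset ?_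
    intro t ht
    rw [Metric.mem_closedBall, dist_zero_right]
    exact hC t ht
  have hScompact : IsCompact S := Metric.isCompact_of_isClosed_isBounded hSclosed hSbdd
  -- finite δ-net inside S
  obtain ⟨Tsub, hTcover⟩ := hScompact.elim_finite_subcover
    (fun θ : S => Metric.ball (θ : Fin n → ℝ) δ)
    (fun θ => Metric.isOpen_ball)
    (fun u hu => Set.mem_iUnion.2 ⟨⟨u, hu⟩, Metric.mem_ball_self hδ⟩)
  set T : Finset (Fin n → ℝ) := Tsub.image (fun θ : S => (θ : Fin n → ℝ)) with hT
  have hTmem : ∀ θ ∈ T, h θ = 1 := by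
    intro θ hθ
    rw [hT, Finset.mem_image] at hθ
    obtain ⟨θ', _, rfl⟩ := hθ
    exact θ'.2
  have hTcover' : ∀ u, h u = 1 → ∃ θ ∈ T, dist u θ < δ := by
    intro u hu
    have := hTcover hu
    rw [Set.mem_iUnion₂] at this
    obtain ⟨θ', hθ'T, hθ'⟩ := this
    exact ⟨(θ' : Fin n → ℝ), Finset.mem_image_of_mem _ hθ'T, hθ'⟩
  -- bump functions
  set b : (Fin n → ℝ) → (Fin n → ℝ) → ℝ := fun θ v => max (δ - dist v θ) 0 with hb
  have hbcont : ∀ θ, Continuous (b θ) :=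
    fun θ => (continuous_const.sub (continuous_id.dist continuous_const)).max continuous_const
  have hbnonneg : ∀ θ v, 0 ≤ b θ v := fun θ v => le_max_right _ _
  set B : (Fin n → ℝ) → ℝ := fun v => ∑ θ ∈ T, b θ v with hB
  have hBcont : Continuous B := continuous_finset_sum _ fun θ _ => hbcont θ
  have hBnonneg : ∀ v, 0 ≤ B v := fun v => Finset.sum_nonneg fun θ _ => hbnonneg θ v
  have hble : ∀ θ ∈ T, ∀ v, b θ v ≤ B v :=
    fun θ hθ v => Finset.single_le_sum (fun θ' _ => hbnonneg θ' v) hθ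
  have hBpos : ∀ v, h v = 1 → 0 < B v := by
    intro v hv
    obtain ⟨θ, hθT, hθd⟩ := hTcover' v hv
    refine Finset.sum_pos' (fun θ' _ => hbnonneg θ' v) ⟨θ, hθT, ?_⟩
    rw [hb]
    simp only [lt_max_iff]
    left; linarith
  -- normalization
  have hnorm1 : ∀ t : Fin n → ℝ, h t ≠ 0 → h ((h t)⁻¹ • t) = 1 := by
    intro t ht
    rw [hhom, abs_of_nonneg (inv_nonneg.2 (hnonneg t))]
    exact inv_mul_cancel₀ ht
  -- the partition
  set q : (Fin n → ℝ) → (Fin n → ℝ) → ℝ := fun θ t =>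
    if h t = 0 then 0 else (b θ ((h t)⁻¹ • t) / B ((h t)⁻¹ • t)) * h t with hq
  have hqnonneg : ∀ θ t, 0 ≤ q θ t := by
    intro θ t
    rw [hq]
    by_cases ht : h t = 0
    · simp [ht]
    · simp only [ht, if_false]
      exact mul_nonneg (div_nonneg (hbnonneg _ _) (hBnonneg _)) (hnonneg t)
  have hqle : ∀ θ ∈ T, ∀ t, q θ t ≤ h t := by
    intro θ hθ t
    rw [hq]
    by_cases ht : h t = 0
    · simp [ht, hnonneg t]
    · simp only [ht, if_false]
      have h1 : b θ ((h t)⁻¹ • t) / B ((h t)⁻¹ • t) ≤ 1 := by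
        rw [div_le_one (hBpos _ (hnorm1 t ht))]
        exact hble θ hθ _
      calc (b θ ((h t)⁻¹ • t) / B ((h t)⁻¹ • t)) * h t ≤ 1 * h t :=
            mul_le_mul_of_nonneg_right h1 (hnonneg t)
        _ = h t := one_mul _
  have hqzero : ∀ θ, q θ 0 = 0 := fun θ => by rw [hq]; simp [h0]
  -- continuity
  have hqcont : ∀ θ ∈ T, Continuous (q θ) := by
    intro θ hθ
    rw [continuous_iff_continuousAt]
    intro t₀
    by_cases ht₀ : h t₀ = 0
    · -- squeeze at a zero of h
      have hq0 : q θ t₀ = 0 := by rw [hq]; simp [ht₀]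
      unfold ContinuousAt
      rw [hq0]
      refine squeeze_zero (hqnonneg θ) (hqle θ hθ) ?_
      have : Filter.Tendsto h (nhds t₀) (nhds (h t₀)) := hcont.continuousAt
      rwa [ht₀] at this
    · -- locally the nice formula
      have hopen : IsOpen {t : Fin n → ℝ | h t ≠ 0} :=
        (isOpen_compl_singleton (x := (0:ℝ))).preimage hcont
      have hmem : {t : Fin n → ℝ | h t ≠ 0} ∈ nhds t₀ := hopen.mem_nhds ht₀
      have heq : ∀ t ∈ {t : Fin n → ℝ | h t ≠ 0},
          q θ t = (b θ ((h t)⁻¹ • t) / B ((h t)⁻¹ • t)) * h t := by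
        intro t ht
        simp only [Set.mem_setOf_eq] at ht
        rw [hq]; simp only [ht, if_false]
      have hu : ContinuousAt (fun t : Fin n → ℝ => (h t)⁻¹ • t) t₀ :=
        ((hcont.continuousAt).inv₀ ht₀).smul continuousAt_id
      have hg : ContinuousAt
          (fun t : Fin n → ℝ => (b θ ((h t)⁻¹ • t) / B ((h t)⁻¹ • t)) * h t) t₀ := by
        have hBne : B ((h t₀)⁻¹ • t₀) ≠ 0 := (hBpos _ (hnorm1 t₀ ht₀)).ne'
        exact ((((hbcont θ).continuousAt.comp hu).div
          ((hBcont.continuousAt).comp hu) hBne).mul hcont.continuousAt)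
      refine hg.congr ?_
      refine Filter.eventuallyEq_of_mem hmem fun t ht => ?_
      exact (heq t ht).symm
  -- homogeneity
  have hqhom : ∀ θ, ∀ (c : ℝ), 0 ≤ c → ∀ t, q θ (c • t) = c * q θ t := by
    intro θ c hc t
    rcases eq_or_lt_of_le hc with hc0 | hcpos
    · rw [← hc0, zero_smul, hqzero θ, zero_mul]
    · by_cases ht : h t = 0
      · have hct : h (c • t) = 0 := by rw [hhom, ht, mul_zero]
        rw [hq]; simp [ht, hct]
      · have hct : h (c • t) = c * h t := by
          rw [hhom, abs_of_nonneg hc]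
        have hctne : h (c • t) ≠ 0 := by
          rw [hct]; exact mul_ne_zero hcpos.ne' ht
        have hsame : (h (c • t))⁻¹ • (c • t) = (h t)⁻¹ • t := by
          rw [hct, smul_smul]
          congr 1
          field_simp
        rw [hq]
        simp only [ht, if_false]
        rw [if_neg hctne, hsame, hct]
        ring
  -- sum
  have hqsum : ∀ t, ∑ θ ∈ T, q θ t = h t := by
    intro t
    by_cases ht : h t = 0
    · rw [ht]
      refine Finset.sum_eq_zero fun θ _ => ?_
      rw [hq]; simp [ht]
    · have hBu : B ((h t)⁻¹ • t) ≠ 0 := (hBpos _ (hnorm1 t ht)).ne'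
      have : ∑ θ ∈ T, q θ t
          = (∑ θ ∈ T, b θ ((h t)⁻¹ • t)) / B ((h t)⁻¹ • t) * h t := by
        rw [Finset.sum_div, Finset.sum_mul]
        refine Finset.sum_congr rfl fun θ _ => ?_
        rw [hq]; simp [ht]
      have hdiv : (∑ θ ∈ T, b θ ((h t)⁻¹ • t)) / B ((h t)⁻¹ • t) = 1 := div_self hBu
      rw [this, hdiv, one_mul]
  -- accuracy
  have hqacc : ∀ t (j : Fin n), |(∑ θ ∈ T, θ j * q θ t) - t j| ≤ δ * h t := by
    intro t j
    by_cases ht : h t = 0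
    · have ht0 : t = 0 := hdef t ht
      subst ht0
      have : ∀ θ ∈ T, θ j * q θ 0 = 0 := fun θ _ => by rw [hqzero θ, mul_zero]
      rw [Finset.sum_congr rfl this, Finset.sum_const_zero]
      simp [h0]
    · set u : Fin n → ℝ := (h t)⁻¹ • t with hu
      have hu1 : h u = 1 := hnorm1 t ht
      have hBu : 0 < B u := hBpos u hu1
      have htu : ∀ j : Fin n, t j = h t * u j := by
        intro i
        rw [hu]
        simp only [Pi.smul_apply, smul_eq_mul]
        field_simp
      have hqu : ∀ θ, q θ t = (b θ u / B u) * h t := by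
        intro θ; rw [hq]; simp [ht, hu]
      have hsumrho : ∑ θ ∈ T, b θ u / B u = 1 := by
        rw [← Finset.sum_div]
        exact div_self hBu.ne'
      have key : (∑ θ ∈ T, θ j * q θ t) - t j
          = (∑ θ ∈ T, (b θ u / B u) * (θ j - u j)) * h t := by
        rw [Finset.sum_mul]
        rw [htu j]
        have : ∀ θ ∈ T, θ j * q θ t = (b θ u / B u) * θ j * h t := by
          intro θ _; rw [hqu θ]; ring
        rw [Finset.sum_congr rfl this]
        have e2 : h t * u j = (∑ θ ∈ T, b θ u / B u) * (u j * h t) := by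
          rw [hsumrho]; ring
        rw [e2, Finset.sum_mul]
        rw [← Finset.sum_sub_distrib]
        refine Finset.sum_congr rfl fun θ _ => ?_
        ring
      rw [key, abs_mul, abs_of_nonneg (hnonneg t)]
      have hmain : |∑ θ ∈ T, (b θ u / B u) * (θ j - u j)| ≤ δ := by
        calc |∑ θ ∈ T, (b θ u / B u) * (θ j - u j)|
            ≤ ∑ θ ∈ T, |(b θ u / B u) * (θ j - u j)| := Finset.abs_sum_le_sum_abs _ _
          _ ≤ ∑ θ ∈ T, (b θ u / B u) * δ := by
              refine Finset.sum_le_sum fun θ hθ => ?_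
              rw [abs_mul, abs_of_nonneg (div_nonneg (hbnonneg θ u) (hBnonneg u))]
              by_cases hbz : b θ u = 0
              · simp [hbz]
              · have hρ : 0 ≤ b θ u / B u := div_nonneg (hbnonneg θ u) (hBnonneg u)
                have hdist : dist u θ < δ := by
                  by_contra hge
                  apply hbz
                  show (δ - dist u θ) ⊔ 0 = 0
                  exact sup_eq_right.2 (by push_neg at hge; linarith)
                have hcoord : |θ j - u j| ≤ δ := by
                  have h1 : dist (u j) (θ j) ≤ dist u θ := dist_le_pi_dist u θ j
                  rw [Real.dist_eq] at h1
                  rw [abs_sub_comm]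
                  linarith
                exact mul_le_mul_of_nonneg_left hcoord hρ
          _ = δ * ∑ θ ∈ T, b θ u / B u := by
              rw [Finset.mul_sum]
              exact Finset.sum_congr rfl fun _ _ => mul_comm _ _
          _ = δ := by rw [hsumrho, mul_one]
      exact mul_le_mul_of_nonneg_right hmain (hnonneg t)
  exact ⟨T, q, hTmem, fun θ hθ => ⟨hqcont θ hθ, hqhom θ⟩, fun θ _ t => hqnonneg θ t,
    hqsum, hqacc⟩

end Partition
lemma hom1_fun_sub {n : ℕ} {h₁ h₂ : (Fin n → ℝ) → ℝ} (H1 : Hom1 n h₁) (H2 : Hom1 n h₂) :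
    Hom1 n (fun t => h₁ t - h₂ t) := by
  refine ⟨H1.1.sub H2.1, fun c hc t => ?_⟩
  show h₁ (c • t) - h₂ (c • t) = c * (h₁ t - h₂ t)
  rw [H1.2 c hc t, H2.2 c hc t]; ring

/-- Lemma (generalizing Lindenstrauss–Tzafriri, Prop. 1.d.2): for a Banach lattice `X`
with dual Banach lattice `X*` (realized as a Banach lattice `D` together with an
isometric order isomorphism `pair : D ≃ X*`), for all `x₁,...,x_n ∈ X` and
`φ₁,...,φ_n ∈ X*`,
`Σ_j |φ_j(x_j)| ≤ ⟨ ‖(x₁,...,x_n)‖_Y , ‖(φ₁,...,φ_n)‖_{Y^×} ⟩`,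
the two lattice elements being given by Krivine's functional calculus in `X` and in
`X*` respectively. -/
theorem stmt18 (Y : BanachSeqLattice) {X D : Type*}
    [NormedAddCommGroup X] [Lattice X] [HasSolidNorm X] [IsOrderedAddMonoid X] [NormedSpace ℝ X] [CompleteSpace X]
    [NormedAddCommGroup D] [Lattice D] [HasSolidNorm D] [IsOrderedAddMonoid D] [NormedSpace ℝ D] [CompleteSpace D]
    (pair : D →ₗ[ℝ] (X →L[ℝ] ℝ)) (hbij : Function.Bijective pair)
    (hiso : ∀ φ : D, ‖pair φ‖ = ‖φ‖)
    (hpos : ∀ φ : D, 0 ≤ φ ↔ ∀ x : X, 0 ≤ x → 0 ≤ pair φ x)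
    (τX : ∀ n : ℕ, (Fin n → X) → ((Fin n → ℝ) → ℝ) → X)
    (hXadd : ∀ (n : ℕ) (x : Fin n → X) (h₁ h₂ : (Fin n → ℝ) → ℝ), Hom1 n h₁ → Hom1 n h₂ →
      τX n x (h₁ + h₂) = τX n x h₁ + τX n x h₂)
    (hXsmul : ∀ (n : ℕ) (x : Fin n → X) (c : ℝ) (h : (Fin n → ℝ) → ℝ), Hom1 n h →
      τX n x (c • h) = c • τX n x h)
    (hXsup : ∀ (n : ℕ) (x : Fin n → X) (h₁ h₂ : (Fin n → ℝ) → ℝ), Hom1 n h₁ → Hom1 n h₂ →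
      τX n x (h₁ ⊔ h₂) = τX n x h₁ ⊔ τX n x h₂)
    (hXproj : ∀ (n : ℕ) (x : Fin n → X) (j : Fin n), τX n x (fun t => t j) = x j)
    (τD : ∀ n : ℕ, (Fin n → D) → ((Fin n → ℝ) → ℝ) → D)
    (hDadd : ∀ (n : ℕ) (φ : Fin n → D) (h₁ h₂ : (Fin n → ℝ) → ℝ), Hom1 n h₁ → Hom1 n h₂ →
      τD n φ (h₁ + h₂) = τD n φ h₁ + τD n φ h₂)
    (hDsmul : ∀ (n : ℕ) (φ : Fin n → D) (c : ℝ) (h : (Fin n → ℝ) → ℝ), Hom1 n h →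
      τD n φ (c • h) = c • τD n φ h)
    (hDsup : ∀ (n : ℕ) (φ : Fin n → D) (h₁ h₂ : (Fin n → ℝ) → ℝ), Hom1 n h₁ → Hom1 n h₂ →
      τD n φ (h₁ ⊔ h₂) = τD n φ h₁ ⊔ τD n φ h₂)
    (hDproj : ∀ (n : ℕ) (φ : Fin n → D) (j : Fin n), τD n φ (fun t => t j) = φ j)
    (n : ℕ) (x : Fin n → X) (φ : Fin n → D) :
    ∑ j, |pair (φ j) (x j)| ≤
      pair (τD n φ (fun t => Knrm Y (finSeq n t))) (τX n x (fun t => Y.nrm (finSeq n t))) := by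
  classical
  show ∑ j, |pair (φ j) (x j)| ≤ pair (τD n φ (hK Y n)) (τX n x (hY Y n))
  set f : X := τX n x (hY Y n) with hf
  set g : D := τD n φ (hK Y n) with hg
  have hfnonneg : 0 ≤ f :=
    tau_nonneg τX hXsmul hXsup x (hY_hom1 Y) (hY_nonneg Y)
  have hgnonneg : 0 ≤ g :=
    tau_nonneg τD hDsmul hDsup φ (hK_hom1 Y) (hK_nonneg Y)
  -- signs
  set sg : Fin n → ℝ := fun j => if 0 ≤ pair (φ j) (x j) then 1 else -1 with hsg
  have hsgabs : ∀ j, |sg j| = 1 := by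
    intro j; rw [hsg]; by_cases hj : 0 ≤ pair (φ j) (x j) <;> simp [hj]
  have hsgval : ∀ j, sg j * pair (φ j) (x j) = |pair (φ j) (x j)| := by
    intro j; rw [hsg]
    by_cases hj : 0 ≤ pair (φ j) (x j)
    · simp [hj, abs_of_nonneg hj]
    · push_neg at hj
      simp only [hj.not_ge, if_false]
      rw [abs_of_neg hj]; ring
  -- the coefficient functionals are dominated by g
  have hpsi_le : ∀ a : Fin n → ℝ, hY Y n a = 1 → (∑ j, (a j) • φ j) ≤ g := by
    intro a ha
    have hlin : Hom1 n (fun s : Fin n → ℝ => ∑ j, a j * s j) :=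
      hom1_sum Finset.univ (fun j s => a j * s j)
        (fun j _ => hom1_fun_smul (a j) (hom1_proj j))
    have heq : τD n φ (fun s => ∑ j, a j * s j) = ∑ j, (a j) • φ j :=
      tau_coord_combo τD hDadd hDsmul hDproj φ a
    have hle : ∀ s, (∑ j, a j * s j) ≤ hK Y n s := by
      intro s
      calc (∑ j, a j * s j) ≤ |∑ j, a j * s j| := le_abs_self _
        _ ≤ ∑ j, |a j * s j| := Finset.abs_sum_le_sum_abs _ _
        _ ≤ hY Y n a * hK Y n s := holder Y a s
        _ = hK Y n s := by rw [ha, one_mul]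
    rw [← heq, hg]
    exact tau_mono τD hDsup φ hlin (hK_hom1 Y) hle
  refine le_of_forall_pos_le_add fun ε hε => ?_
  set M : ℝ := (∑ j, ‖pair (φ j)‖ * ‖f‖) + 1 with hM
  have hMpos : 0 < M := by
    have : 0 ≤ ∑ j, ‖pair (φ j)‖ * ‖f‖ :=
      Finset.sum_nonneg fun j _ => mul_nonneg (norm_nonneg _) (norm_nonneg _)
    rw [hM]; linarith
  set δ : ℝ := ε / M with hδdef
  have hδ : 0 < δ := div_pos hε hMpos
  -- coordinate bound for the sphere of hY
  have hbound : ∃ C, ∀ t : Fin n → ℝ, hY Y n t = 1 → ‖t‖ ≤ C := by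
    refine ⟨∑ j : Fin n, hK Y n (Pi.single j 1), fun t ht => ?_⟩
    have hC0 : 0 ≤ ∑ j : Fin n, hK Y n (Pi.single j 1) :=
      Finset.sum_nonneg fun j _ => hK_nonneg Y _
    rw [pi_norm_le_iff_of_nonneg hC0]
    intro j
    have h1 : |t j| ≤ ∑ i : Fin n, |t i * (Pi.single j 1 : Fin n → ℝ) i| := by
      have he : |t j * (Pi.single j 1 : Fin n → ℝ) j| = |t j| := by simp
      rw [← he]
      exact Finset.single_le_sum
        (f := fun i : Fin n => |t i * (Pi.single j 1 : Fin n → ℝ) i|)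
        (fun i _ => abs_nonneg _) (Finset.mem_univ j)
    have h2 : ∑ i : Fin n, |t i * (Pi.single j 1 : Fin n → ℝ) i|
        ≤ hY Y n t * hK Y n (Pi.single j 1) := holder Y t _
    rw [Real.norm_eq_abs]
    calc |t j| ≤ hY Y n t * hK Y n (Pi.single j 1) := h1.trans h2
      _ = hK Y n (Pi.single j 1) := by rw [ht, one_mul]
      _ ≤ ∑ i : Fin n, hK Y n (Pi.single i 1) :=
        Finset.single_le_sum (f := fun i : Fin n => hK Y n (Pi.single i 1))
          (fun i _ => hK_nonneg Y _) (Finset.mem_univ j)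
  obtain ⟨T, q, hT1, hThom, hTnn, hTsum, hTacc⟩ :=
    partition_main (hY Y n) (hY_cont Y) (hY_smul Y) (hY_nonneg Y)
      (fun t ht => hY_eq_zero Y ht) hbound hδ
  -- the decomposition of f
  set u : (Fin n → ℝ) → X := fun θ => τX n x (q θ) with hu
  have husum : f = ∑ θ ∈ T, u θ := by
    have : hY Y n = fun t => ∑ θ ∈ T, q θ t := by
      funext t; rw [hTsum t]
    rw [hf, this, tau_sum τX hXadd hXsmul x T q hThom]
  have hunn : ∀ θ ∈ T, 0 ≤ u θ := fun θ hθ =>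
    tau_nonneg τX hXsmul hXsup x (hThom θ hθ) (hTnn θ hθ)
  -- the functionals
  set ψ : (Fin n → ℝ) → D := fun θ => ∑ j, (sg j * θ j) • φ j with hψ
  have hψle : ∀ θ ∈ T, ψ θ ≤ g := by
    intro θ hθ
    refine hpsi_le (fun j => sg j * θ j) ?_
    rw [← hT1 θ hθ]
    refine hY_congr_abs Y fun j => ?_
    rw [abs_mul, hsgabs j, one_mul]
  -- main inequality
  have hmain : ∑ θ ∈ T, pair (ψ θ) (u θ) ≤ pair g f := by
    have h1 : pair g f = ∑ θ ∈ T, pair g (u θ) := by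
      rw [husum]
      exact map_sum (pair g) u T
    rw [h1]
    refine Finset.sum_le_sum fun θ hθ => ?_
    have hd : 0 ≤ g - ψ θ := sub_nonneg.2 (hψle θ hθ)
    have := ((hpos (g - ψ θ)).1 hd) (u θ) (hunn θ hθ)
    rw [map_sub] at this
    rw [ContinuousLinearMap.sub_apply] at this
    linarith
  -- rearrangement
  set w : Fin n → X := fun j => ∑ θ ∈ T, (sg j * θ j) • u θ with hw
  have hswap : ∑ θ ∈ T, pair (ψ θ) (u θ) = ∑ j, pair (φ j) (w j) := by
    have h1 : ∀ θ, pair (ψ θ) (u θ) = ∑ j, (sg j * θ j) * pair (φ j) (u θ) := by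
      intro θ
      rw [hψ]
      rw [map_sum pair (fun j => (sg j * θ j) • φ j) Finset.univ]
      rw [ContinuousLinearMap.sum_apply]
      refine Finset.sum_congr rfl fun j _ => ?_
      rw [map_smul, ContinuousLinearMap.smul_apply, smul_eq_mul]
    have h2 : ∀ j, pair (φ j) (w j) = ∑ θ ∈ T, (sg j * θ j) * pair (φ j) (u θ) := by
      intro j
      rw [hw, map_sum (pair (φ j)) (fun θ => (sg j * θ j) • u θ) T]
      refine Finset.sum_congr rfl fun θ _ => ?_
      rw [map_smul, smul_eq_mul]
    rw [Finset.sum_congr rfl fun θ _ => h1 θ, Finset.sum_comm,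
      Finset.sum_congr rfl fun j _ => (h2 j).symm]
  -- error estimate
  have herr : ∀ j : Fin n, |pair (φ j) (x j)|
      ≤ pair (φ j) (w j) + ‖pair (φ j)‖ * (δ * ‖f‖) := by
    intro j
    -- w j as functional calculus element
    set kj : (Fin n → ℝ) → ℝ := fun t => ∑ θ ∈ T, (sg j * θ j) * q θ t with hkj
    have hkjhom : Hom1 n kj :=
      hom1_sum T _ (fun θ hθ => hom1_fun_smul _ (hThom θ hθ))
    have hwj : w j = τX n x kj := by
      rw [hkj, tau_sum τX hXadd hXsmul x T _
        (fun θ hθ => hom1_fun_smul _ (hThom θ hθ)), hw]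
      refine Finset.sum_congr rfl fun θ hθ => ?_
      rw [tau_fun_smul τX hXsmul x _ (hThom θ hθ), hu]
    set lj : (Fin n → ℝ) → ℝ := fun t => sg j * t j with hlj
    have hljhom : Hom1 n lj := hom1_fun_smul _ (hom1_proj j)
    have hlx : τX n x lj = sg j • x j := by
      rw [hlj, tau_fun_smul τX hXsmul x _ (hom1_proj j), hXproj n x j]
    -- pointwise error bound
    have hpt : ∀ t, |kj t - lj t| ≤ δ * hY Y n t := by
      intro t
      have : kj t - lj t = sg j * ((∑ θ ∈ T, θ j * q θ t) - t j) := by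
        rw [hkj, hlj, mul_sub, Finset.mul_sum]
        congr 1
        refine Finset.sum_congr rfl fun θ _ => by ring
      rw [this, abs_mul, hsgabs j, one_mul]
      exact hTacc t j
    set d : X := τX n x kj - sg j • x j with hd
    have hdcalc : d = τX n x (fun t => kj t - lj t) := by
      rw [tau_sub τX hXadd hXsmul x hkjhom hljhom, hlx, hd]
    have hup : τX n x (fun t => kj t - lj t) ≤ δ • f := by
      have := tau_mono τX hXsup x (hom1_fun_sub hkjhom hljhom)
        (hom1_fun_smul δ (hY_hom1 Y))
        (fun t => (le_abs_self _).trans (hpt t))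
      rwa [tau_fun_smul τX hXsmul x δ (hY_hom1 Y), ← hf] at this
    have hdown : -(δ • f) ≤ τX n x (fun t => kj t - lj t) := by
      have h1 := tau_mono τX hXsup x (hom1_fun_sub hljhom hkjhom)
        (hom1_fun_smul δ (hY_hom1 Y))
        (fun t => by
          have := (neg_abs_le (kj t - lj t)).trans (le_abs_self _)
          have h2 := hpt t
          have h3 : lj t - kj t ≤ |kj t - lj t| := by
            rw [abs_sub_comm]; exact le_abs_self _
          linarith)
      rw [tau_fun_smul τX hXsmul x δ (hY_hom1 Y), ← hf] at h1
      have h4 : τX n x (fun t => lj t - kj t) = -(τX n x (fun t => kj t - lj t)) := by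
        rw [tau_sub τX hXadd hXsmul x hljhom hkjhom,
          tau_sub τX hXadd hXsmul x hkjhom hljhom]
        abel
      rw [h4] at h1
      exact neg_le.1 h1
    have habs : |d| ≤ δ • f := by
      rw [hdcalc, abs]
      exact sup_le hup (neg_le.mpr hdown)
    have hδf : 0 ≤ δ • f := by
      have h5 := tau_nonneg τX hXsmul hXsup x (hom1_fun_smul δ (hY_hom1 Y))
        (fun t => mul_nonneg hδ.le (hY_nonneg Y t))
      rwa [tau_fun_smul τX hXsmul x δ (hY_hom1 Y), ← hf] at h5
    have hnorm : ‖d‖ ≤ δ * ‖f‖ := by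
      have h5 : |d| ≤ |δ • f| := by
        rwa [abs_of_nonneg hδf]
      calc ‖d‖ ≤ ‖δ • f‖ := HasSolidNorm.solid h5
        _ = δ * ‖f‖ := by
          rw [norm_smul, Real.norm_eq_abs, abs_of_nonneg hδ.le]
    have hpair : |pair (φ j) d| ≤ ‖pair (φ j)‖ * (δ * ‖f‖) := by
      calc |pair (φ j) d| = ‖pair (φ j) d‖ := (Real.norm_eq_abs _).symm
        _ ≤ ‖pair (φ j)‖ * ‖d‖ := ContinuousLinearMap.le_opNorm _ _
        _ ≤ ‖pair (φ j)‖ * (δ * ‖f‖) :=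
          mul_le_mul_of_nonneg_left hnorm (norm_nonneg _)
    have hxd : sg j • x j = w j - d := by
      rw [hd, hwj]; abel
    have hsm : pair (φ j) (sg j • x j) = sg j * pair (φ j) (x j) := by
      rw [(pair (φ j)).map_smul, smul_eq_mul]
    calc |pair (φ j) (x j)| = sg j * pair (φ j) (x j) := (hsgval j).symm
      _ = pair (φ j) (sg j • x j) := hsm.symm
      _ = pair (φ j) (w j) - pair (φ j) d := by rw [hxd, map_sub]
      _ ≤ pair (φ j) (w j) + ‖pair (φ j)‖ * (δ * ‖f‖) := by
          have h9 := neg_abs_le (pair (φ j) d)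
          linarith [hpair]
  -- conclusion
  calc ∑ j, |pair (φ j) (x j)|
      ≤ ∑ j, (pair (φ j) (w j) + ‖pair (φ j)‖ * (δ * ‖f‖)) :=
        Finset.sum_le_sum fun j _ => herr j
    _ = (∑ j, pair (φ j) (w j)) + ∑ j, ‖pair (φ j)‖ * (δ * ‖f‖) :=
        Finset.sum_add_distrib
    _ ≤ pair g f + ∑ j, ‖pair (φ j)‖ * (δ * ‖f‖) := by
        rw [← hswap]
        linarith [hmain]
    _ ≤ pair g f + ε := by
        have h6 : ∑ j, ‖pair (φ j)‖ * (δ * ‖f‖) = δ * ∑ j, ‖pair (φ j)‖ * ‖f‖ := by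
          rw [Finset.mul_sum]
          exact Finset.sum_congr rfl fun j _ => by ring
        have h7 : δ * (∑ j, ‖pair (φ j)‖ * ‖f‖) ≤ δ * M := by
          refine mul_le_mul_of_nonneg_left ?_ hδ.le
          rw [hM]; linarith
        have h8 : δ * M = ε := by
          rw [hδdef]; field_simp
        linarith
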